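/- Define F(u) = T*(2u+1) − (2u+1) ln u for real u ≥ 1. Then F is monotonically decreasing for sufficiently large argument: there exists K₀ ≥ 1 such that for all real u, v with K₀ ≤ v ≤ u one has F(u) ≤ F(v). -/

import Mathlib

open Filter Topology

/-- Legendre transform `T*(q) = sup_s (qs - T(s))`. -/
noncomputable def legendreTransform (T : ℝ → ℝ) (q : ℝ) : ℝ := ⨆ s : ℝ, (q * s - T s)

/-- `F(u) = T*(2u+1) - (2u+1) ln u` is monotonically decreasing for sufficiently
large real argument. -/
theorem F_eventually_antitone
    (S : ℝ → ℝ) (hS : ContDiffOn ℝ 2 S (Set.Ioi 0))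
    (hS' : ∀ t > 0, 0 ≤ deriv S t) (hS'' : ∀ t > 0, 0 ≤ deriv (deriv S) t)
    (hS'inf : Tendsto (deriv S) atTop atTop) :
    ∃ K₀ : ℝ, 1 ≤ K₀ ∧ ∀ u v : ℝ, K₀ ≤ v → v ≤ u →
      legendreTransform (fun s => S (Real.exp s)) (2 * u + 1) - (2 * u + 1) * Real.log u
        ≤ legendreTransform (fun s => S (Real.exp s)) (2 * v + 1) - (2 * v + 1) * Real.log v := by
  -- Basic differentiability facts
  have hSd : DifferentiableOn ℝ S (Set.Ioi 0) := hS.differentiableOn (by norm_num)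
  have hSdAt : ∀ t : ℝ, 0 < t → DifferentiableAt ℝ S t := fun t ht =>
    (hSd t ht).differentiableAt (isOpen_Ioi.mem_nhds ht)
  have hDS : ContDiffOn ℝ 1 (deriv S) (Set.Ioi 0) :=
    hS.deriv_of_isOpen isOpen_Ioi (by norm_num)
  have hDSc : ContinuousOn (deriv S) (Set.Ioi 0) := hDS.continuousOn
  have hDSd : DifferentiableOn ℝ (deriv S) (Set.Ioi 0) := hDS.differentiableOn one_ne_zero
  -- `deriv S` is monotone on `(0,∞)`
  have hmono' : MonotoneOn (deriv S) (Set.Ioi 0) := by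
    apply monotoneOn_of_deriv_nonneg (convex_Ioi 0) hDSc
    · rw [interior_Ioi]; exact hDSd
    · rw [interior_Ioi]; exact fun x hx => hS'' x hx
  -- `S` is monotone on `(0,∞)`
  have hmono : MonotoneOn S (Set.Ioi 0) := by
    apply monotoneOn_of_deriv_nonneg (convex_Ioi 0) hSd.continuousOn
    · rw [interior_Ioi]; exact hSd
    · rw [interior_Ioi]; exact fun x hx => hS' x hx
  -- Global lower bound for S on (0,∞)
  set m : ℝ := S 1 - deriv S 1 with hm_def
  have hc1 : 0 ≤ deriv S 1 := hS' 1 one_pos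
  have hmS : ∀ t : ℝ, 0 < t → m ≤ S t := by
    intro t ht
    rcases le_or_gt 1 t with h1 | h1
    · have := hmono (Set.mem_Ioi.2 one_pos) (Set.mem_Ioi.2 ht) h1
      simp only [hm_def]; linarith
    · -- use convexity: S t ≥ S 1 - deriv S 1 * (1 - t)
      have hg : AntitoneOn (fun x => S x - deriv S 1 * x) (Set.Ioc 0 1) := by
        apply antitoneOn_of_deriv_nonpos (convex_Ioc 0 1)
        · exact (hSd.continuousOn.mono Set.Ioc_subset_Ioi_self).sub
            (continuous_const.mul continuous_id).continuousOn
        · rw [interior_Ioc]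
          intro x hx
          exact ((hSdAt x hx.1).sub ((differentiableAt_const _).mul differentiableAt_id)).differentiableWithinAt
        · rw [interior_Ioc]
          intro x hx
          have hd : deriv (fun x => S x - deriv S 1 * x) x = deriv S x - deriv S 1 := by
            have := ((hSdAt x hx.1).hasDerivAt.sub
              ((hasDerivAt_id x).const_mul (deriv S 1))).deriv
            simp at this; exact this
          rw [hd]
          have := hmono' (Set.mem_Ioi.2 hx.1) (Set.mem_Ioi.2 one_pos) hx.2.le
          linarith
      have := hg (Set.mem_Ioc.2 ⟨ht, h1.le⟩) (Set.mem_Ioc.2 ⟨one_pos, le_rfl⟩) h1.le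
      simp only [hm_def] at *
      nlinarith [ht.le]
  -- threshold where deriv S ≥ 3
  obtain ⟨t₀, ht₀⟩ := (hS'inf.eventually_ge_atTop 3).exists_forall_of_atTop
  set t₁ : ℝ := max t₀ 1 with ht₁_def
  have ht₁1 : (1:ℝ) ≤ t₁ := le_max_right _ _
  have ht₁ : ∀ t : ℝ, t₁ ≤ t → 3 ≤ deriv S t := fun t ht =>
    ht₀ t (le_trans (le_max_left _ _) ht)
  -- the function whose sup is the Legendre transform
  set T : ℝ → ℝ := fun s => S (Real.exp s) with hT_def
  have hfderiv : ∀ (q s : ℝ), HasDerivAt (fun s => q * s - T s)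
      (q - deriv S (Real.exp s) * Real.exp s) s := by
    intro q s
    have h1 : HasDerivAt (fun s => S (Real.exp s)) (deriv S (Real.exp s) * Real.exp s) s :=
      ((hSdAt _ (Real.exp_pos s)).hasDerivAt).comp s (Real.hasDerivAt_exp s)
    have h2 := ((hasDerivAt_id s).const_mul q).sub h1; simp at h2; exact h2
  -- key antitonicity and boundedness, for q ≥ 3 * t₁
  have key : ∀ q : ℝ, 3 * t₁ ≤ q →
      (AntitoneOn (fun s => q * s - T s) (Set.Ici (Real.log (q / 3))) ∧
       BddAbove (Set.range fun s => q * s - T s)) := by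
    intro q hq
    have hq3 : (3:ℝ) ≤ q := by linarith
    have hqpos : 0 < q := by linarith
    set b : ℝ := Real.log (q / 3) with hb_def
    have hexpb : Real.exp b = q / 3 := Real.exp_log (by linarith)
    have hanti : AntitoneOn (fun s => q * s - T s) (Set.Ici b) := by
      apply antitoneOn_of_deriv_nonpos (convex_Ici b)
      · exact fun s _ => ((hfderiv q s).continuousAt).continuousWithinAt
      · exact fun s _ => ((hfderiv q s).differentiableAt).differentiableWithinAt
      · rw [interior_Ici]
        intro s hs
        rw [(hfderiv q s).deriv]
        have hsb : b ≤ s := (Set.mem_Ioi.1 hs).le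
        have he : q / 3 ≤ Real.exp s := by
          rw [← hexpb]; exact Real.exp_le_exp.2 hsb
        have ht1e : t₁ ≤ Real.exp s := le_trans (by linarith) he
        have h3 : 3 ≤ deriv S (Real.exp s) := ht₁ _ ht1e
        have hpos : (0:ℝ) < Real.exp s := Real.exp_pos s
        nlinarith
    refine ⟨hanti, ?_⟩
    refine ⟨max (q * b - T b) (q * b - m), ?_⟩
    rintro x ⟨s, rfl⟩
    rcases le_or_gt s b with hsb | hsb
    · refine le_trans ?_ (le_max_right _ _)
      have h1 : q * s ≤ q * b := by nlinarith
      have h2 : m ≤ T s := hmS _ (Real.exp_pos s)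
      simp only [hT_def] at *
      linarith
    · exact le_trans (hanti (Set.mem_Ici.2 le_rfl) (Set.mem_Ici.2 hsb.le) hsb.le)
        (le_max_left _ _)
  -- the main estimate on Legendre transform differences
  refine ⟨max 1 (3 * t₁), le_max_left _ _, ?_⟩
  intro u v hv huv
  have hv1 : (1:ℝ) ≤ v := le_trans (le_max_left _ _) hv
  have hu1 : (1:ℝ) ≤ u := le_trans hv1 huv
  have hvq : 3 * t₁ ≤ 2 * v + 1 := by
    have : 3 * t₁ ≤ v := le_trans (le_max_right _ _) hv
    linarith
  have huq : 3 * t₁ ≤ 2 * u + 1 := by linarith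
  set p : ℝ := 2 * v + 1 with hp_def
  set q : ℝ := 2 * u + 1 with hq_def
  obtain ⟨hantiq, hbddq⟩ := key q huq
  obtain ⟨hantip, hbddp⟩ := key p hvq
  set b : ℝ := Real.log (q / 3) with hb_def
  have hpq : p ≤ q := by simp only [hp_def, hq_def]; linarith
  have hppos : 0 < p := by simp only [hp_def]; linarith
  -- pointwise bound: ∀ s, q s - T s ≤ T*(p) + (q - p) b
  have hbd : ∀ s ∈ Set.Iic b, q * s - T s ≤ legendreTransform T p + (q - p) * b := by
    intro s hs
    have h1 : p * s - T s ≤ legendreTransform T p := le_ciSup hbddp s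
    have h2 : (q - p) * s ≤ (q - p) * b := by
      have := Set.mem_Iic.1 hs
      nlinarith
    nlinarith
  have hmain : legendreTransform T q ≤ legendreTransform T p + (q - p) * b := by
    apply ciSup_le
    intro s
    rcases le_or_gt s b with hsb | hsb
    · exact hbd s hsb
    · exact le_trans (hantiq (Set.mem_Ici.2 le_rfl) (Set.mem_Ici.2 hsb.le) hsb.le)
        (hbd b (Set.mem_Iic.2 le_rfl))
  -- final arithmetic
  have hblog : b ≤ Real.log u := by
    apply Real.log_le_log (by positivity)
    simp only [hq_def]; linarith
  have hloguv : Real.log v ≤ Real.log u := Real.log_le_log (by linarith) huv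
  have hlogv : 0 ≤ Real.log v := Real.log_nonneg hv1
  have h1 : (q - p) * b ≤ (q - p) * Real.log u := by nlinarith
  have h2 : legendreTransform T q - q * Real.log u ≤
      legendreTransform T p + (q - p) * Real.log u - q * Real.log u := by linarith
  calc legendreTransform T q - q * Real.log u
      ≤ legendreTransform T p + (q - p) * Real.log u - q * Real.log u := h2
    _ = legendreTransform T p - p * Real.log u := by ring
    _ ≤ legendreTransform T p - p * Real.log v := by nlinarith
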